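/- LCA via range minimum on the Euler tour: let T be a finite rooted tree with root r, let u and v be non-root vertices, let e_u = (parent(u), u) and e_v = (parent(v), v), and suppose e_u occurs before e_v in ET(T). Consider the contiguous sublist of ET(T) from e_u to e_v inclusive, and let ê = (x, y) be the first edge in this sublist whose head y has minimum depth among the heads of edges in the sublist. Then y is the lowest common ancestor of u and v in T. Moreover, if ê ≠ e_u, then x is the child of y on the tree path from y to u (so ê is the reversal of the first edge on the path from the LCA toward u). -/

import Mathlib

/-- A finite rooted tree with vertex labels in `V` and a fixed linear order on the
children of each vertex (given by the list order). -/
inductive RTree (V : Type) : Type where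
  | node (label : V) (children : List (RTree V)) : RTree V

namespace RTree

variable {V : Type}

/-- The label of the root. -/
def root : RTree V → V
  | node x _ => x

/-- The Euler tour: `tour (node x cs)` is the concatenation, over the children `c` of `x`
in order, of `[(x, root c)] ++ tour c ++ [(root c, x)]`. -/
def tour : RTree V → List (V × V)
  | node x cs => cs.attach.flatMap (fun c => ((x, c.1.root) :: c.1.tour) ++ [(c.1.root, x)])
  decreasing_by
    have := List.sizeOf_lt_of_mem c.2
    simp only [RTree.node.sizeOf_spec]
    omega

/-- The list of vertex labels occurring in the tree. -/
def vertices : RTree V → List V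
  | node x cs => x :: cs.attach.flatMap (fun c => c.1.vertices)
  decreasing_by
    have := List.sizeOf_lt_of_mem c.2
    simp only [RTree.node.sizeOf_spec]
    omega

/-- `SubtreeAt T p t` : `t` occurs in `T` as the subtree rooted at some child occurrence,
and the parent of `t`'s root is (the vertex labelled) `p`. -/
inductive SubtreeAt : RTree V → V → RTree V → Prop
  | child {x : V} {cs : List (RTree V)} {t : RTree V} (h : t ∈ cs) :
      SubtreeAt (node x cs) x t
  | step {x : V} {cs : List (RTree V)} {c : RTree V} {p : V} {t : RTree V}
      (hc : c ∈ cs) (h : SubtreeAt c p t) : SubtreeAt (node x cs) p t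

/-- `pathTo T y` : the list of vertices on the path from the root of `T` to `y`
(inclusive), or `none` if `y` does not occur in `T`. -/
def pathTo [DecidableEq V] : RTree V → V → Option (List V)
  | node x cs, y =>
    if x = y then some [x]
    else
      match cs.attach.findSome? (fun c => c.1.pathTo y) with
      | some l => some (x :: l)
      | none => none
  decreasing_by
    have := List.sizeOf_lt_of_mem c.2
    simp only [RTree.node.sizeOf_spec]
    omega

/-- The depth of vertex `y` in `T` (number of edges on the root-to-`y` path), with
junk value `0` if `y` does not occur in `T`. -/
def depthD [DecidableEq V] (T : RTree V) (y : V) : ℕ :=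
  (T.pathTo y).elim 0 (fun l => l.length - 1)

end RTree

/-- The longest common prefix of two lists. -/
def commonPrefix {V : Type} [DecidableEq V] : List V → List V → List V
  | a :: as, b :: bs => if a = b then a :: commonPrefix as bs else []
  | _, _ => []

-- ===================== helpers =====================
namespace RTree
variable {V : Type}

theorem attach_flatMap {α β} (l : List α) (f : α → List β) :
    l.attach.flatMap (fun x => f x.1) = l.flatMap f := by
  rw [← List.flatMap_map, List.attach_map_subtype_val]

theorem attach_findSome? {α β} (l : List α) (f : α → Option β) :
    l.attach.findSome? (fun x => f x.1) = l.findSome? f := by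
  conv_rhs => rw [← List.attach_map_subtype_val l]
  rw [List.findSome?_map]; rfl

theorem tour_node (x : V) (cs : List (RTree V)) :
    (node x cs).tour = cs.flatMap (fun c => ((x, c.root) :: c.tour) ++ [(c.root, x)]) := by
  rw [tour]
  exact attach_flatMap cs (fun c => ((x, c.root) :: c.tour) ++ [(c.root, x)])

theorem vertices_node (x : V) (cs : List (RTree V)) :
    (node x cs).vertices = x :: cs.flatMap vertices := by
  rw [vertices]
  rw [show (cs.attach.flatMap fun c => c.1.vertices) = cs.flatMap vertices from attach_flatMap cs vertices]

theorem pathTo_node [DecidableEq V] (x : V) (cs : List (RTree V)) (y : V) :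
    (node x cs).pathTo y =
      if x = y then some [x]
      else
        match cs.findSome? (fun c => c.pathTo y) with
        | some l => some (x :: l)
        | none => none := by
  rw [pathTo]
  rw [show (cs.attach.findSome? fun c => c.1.pathTo y) = cs.findSome? (fun c => c.pathTo y) from attach_findSome? cs (fun c => c.pathTo y)]

theorem root_mem_vertices (t : RTree V) : t.root ∈ t.vertices := by
  obtain ⟨x, cs⟩ := t
  rw [vertices_node]; exact List.mem_cons_self

theorem mem_vertices_of_child {c : RTree V} {cs : List (RTree V)} (hc : c ∈ cs)
    {x : V} {w : V} (hw : w ∈ c.vertices) : w ∈ (node x cs).vertices := by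
  rw [vertices_node]
  exact List.mem_cons_of_mem _ (List.mem_flatMap.2 ⟨c, hc, hw⟩)

theorem tour_mem_vertices : ∀ (t : RTree V) (a b : V), (a, b) ∈ t.tour →
    a ∈ t.vertices ∧ b ∈ t.vertices
  | node x cs, a, b, h => by
    rw [tour_node] at h
    obtain ⟨c, hc, hm⟩ := List.mem_flatMap.1 h
    simp only [List.cons_append, List.mem_cons, List.mem_append, List.mem_singleton,
      Prod.mk.injEq, List.not_mem_nil, or_false] at hm
    have hroot : c.root ∈ (node x cs).vertices := mem_vertices_of_child hc c.root_mem_vertices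
    have hx : x ∈ (node x cs).vertices := by rw [vertices_node]; exact List.mem_cons_self
    rcases hm with h1 | h2 | h3
    · obtain ⟨rfl, rfl⟩ := h1
      exact ⟨hx, hroot⟩
    · have := tour_mem_vertices c a b h2
      exact ⟨mem_vertices_of_child hc this.1, mem_vertices_of_child hc this.2⟩
    · obtain ⟨rfl, rfl⟩ := h3
      exact ⟨hroot, hx⟩
  termination_by t => sizeOf t
  decreasing_by
    have := List.sizeOf_lt_of_mem hc
    simp only [RTree.node.sizeOf_spec]; omega

theorem subtree_root_mem {t : RTree V} {p : V} {s : RTree V} (h : SubtreeAt t p s) :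
    s.root ∈ t.vertices := by
  induction h with
  | child h => exact mem_vertices_of_child h (root_mem_vertices _)
  | step hc _ ih => exact mem_vertices_of_child hc ih

theorem subtree_root_mem_child {x : V} {cs : List (RTree V)} {p : V} {s : RTree V}
    (h : SubtreeAt (node x cs) p s) : ∃ c ∈ cs, s.root ∈ c.vertices := by
  cases h with
  | child h => exact ⟨s, h, s.root_mem_vertices⟩
  | step hc h => exact ⟨_, hc, subtree_root_mem h⟩

-- pathTo basics
theorem pathTo_self [DecidableEq V] (x : V) (cs : List (RTree V)) :
    (node x cs).pathTo x = some [x] := by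
  rw [pathTo_node, if_pos rfl]

theorem pathTo_cons [DecidableEq V] {t : RTree V} {w : V} {l : List V}
    (h : t.pathTo w = some l) : ∃ tail, l = t.root :: tail := by
  obtain ⟨x, cs⟩ := t
  rw [pathTo_node] at h
  split at h
  · exact ⟨[], by simpa using (Option.some.injEq .. ▸ h).symm ▸ rfl⟩
  · split at h
    · exact ⟨_, (Option.some_inj.1 h).symm⟩
    · exact absurd h (by simp)

theorem pathTo_getLast [DecidableEq V] : ∀ (t : RTree V) (w : V) (l : List V),
    t.pathTo w = some l → l.getLast? = some w
  | node x cs, w, l, h => by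
    rw [pathTo_node] at h
    split at h
    · rename_i hxw
      obtain rfl := Option.some_inj.1 h
      simp [hxw]
    · split at h
      · rename_i l' hfind
        obtain rfl := Option.some_inj.1 h
        obtain ⟨c, hc, hcp⟩ := List.exists_of_findSome?_eq_some hfind
        have := pathTo_getLast c w l' hcp
        obtain ⟨tail, rfl⟩ := pathTo_cons hcp
        rw [List.getLast?_cons_cons]
        exact this
      · exact absurd h (by simp)
  termination_by t => sizeOf t
  decreasing_by
    have := List.sizeOf_lt_of_mem hc
    simp only [RTree.node.sizeOf_spec]; omega

theorem mem_of_pathTo [DecidableEq V] : ∀ (t : RTree V) (w : V) (l : List V),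
    t.pathTo w = some l → w ∈ t.vertices
  | node x cs, w, l, h => by
    rw [pathTo_node] at h
    split at h
    · rename_i hxw; rw [vertices_node, ← hxw]; exact List.mem_cons_self
    · split at h
      · rename_i l' hfind
        obtain ⟨c, hc, hcp⟩ := List.exists_of_findSome?_eq_some hfind
        exact mem_vertices_of_child hc (mem_of_pathTo c w l' hcp)
      · exact absurd h (by simp)
  termination_by t => sizeOf t
  decreasing_by
    have := List.sizeOf_lt_of_mem hc
    simp only [RTree.node.sizeOf_spec]; omega

theorem pathTo_isSome_of_mem [DecidableEq V] : ∀ (t : RTree V) (w : V),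
    w ∈ t.vertices → ∃ l, t.pathTo w = some l
  | node x cs, w, hw => by
    rw [vertices_node] at hw
    rw [pathTo_node]
    by_cases hxw : x = w
    · exact ⟨[x], by rw [if_pos hxw]⟩
    · rw [if_neg hxw]
      rcases List.mem_cons.1 hw with rfl | hw'
      · exact absurd rfl hxw
      obtain ⟨c, hc, hwc⟩ := List.mem_flatMap.1 hw'
      obtain ⟨l, hl⟩ := pathTo_isSome_of_mem c w hwc
      have : (cs.findSome? (fun c => c.pathTo w)).isSome := by
        rw [List.findSome?_isSome_iff]
        exact ⟨c, hc, by rw [hl]; simp⟩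
      obtain ⟨l', hl'⟩ := Option.isSome_iff_exists.1 this
      exact ⟨x :: l', by rw [hl']⟩
  termination_by t => sizeOf t
  decreasing_by
    have := List.sizeOf_lt_of_mem hc
    simp only [RTree.node.sizeOf_spec]; omega

theorem pathTo_eq_none [DecidableEq V] : ∀ (t : RTree V) (w : V),
    w ∉ t.vertices → t.pathTo w = none
  | t, w, hw => by
    rcases h : t.pathTo w with _ | l
    · rfl
    · exact absurd (mem_of_pathTo t w l h) hw

end RTree

-- ==== layer 2 ====
namespace RTree
variable {V : Type}

theorem root_not_mem_flatMap {r : V} {cs : List (RTree V)}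
    (h : (node r cs).vertices.Nodup) : r ∉ cs.flatMap vertices := by
  rw [vertices_node] at h
  exact (List.nodup_cons.1 h).1

theorem nodup_flatMap {r : V} {cs : List (RTree V)}
    (h : (node r cs).vertices.Nodup) : (cs.flatMap vertices).Nodup := by
  rw [vertices_node] at h
  exact (List.nodup_cons.1 h).2

theorem nodup_child {cs : List (RTree V)} (h : (cs.flatMap vertices).Nodup)
    {c : RTree V} (hc : c ∈ cs) : c.vertices.Nodup := by
  obtain ⟨cs₁, cs₂, rfl⟩ := List.append_of_mem hc
  rw [List.flatMap_append, List.flatMap_cons] at h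
  exact ((h.of_append_right).of_append_left)

theorem disj_of_nodup {cs₁ cs₂ : List (RTree V)} {c : RTree V}
    (h : ((cs₁ ++ c :: cs₂).flatMap vertices).Nodup)
    {c' : RTree V} (hc' : c' ∈ cs₁ ∨ c' ∈ cs₂) {w : V}
    (hw : w ∈ c.vertices) (hw' : w ∈ c'.vertices) : False := by
  rw [List.flatMap_append, List.flatMap_cons] at h
  rcases hc' with h1 | h2
  · have hd := List.disjoint_of_nodup_append h
    exact hd (List.mem_flatMap.2 ⟨c', h1, hw'⟩) (List.mem_append_left _ hw)
  · have hd := List.disjoint_of_nodup_append h.of_append_right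
    exact hd hw (List.mem_flatMap.2 ⟨c', h2, hw'⟩)

theorem findSome?_pathTo [DecidableEq V] : ∀ {cs : List (RTree V)},
    (cs.flatMap vertices).Nodup → ∀ {c : RTree V}, c ∈ cs → ∀ {w : V}, w ∈ c.vertices →
    ∃ l, c.pathTo w = some l ∧ cs.findSome? (fun t => t.pathTo w) = some l := by
  intro cs
  induction cs with
  | nil => intro _ c hc; exact absurd hc List.not_mem_nil
  | cons d cs' ih =>
    intro h c hc w hw
    rw [List.flatMap_cons] at h
    rcases List.mem_cons.1 hc with rfl | hc'
    · obtain ⟨l, hl⟩ := pathTo_isSome_of_mem c w hw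
      exact ⟨l, hl, by rw [List.findSome?_cons, hl]⟩
    · have hwd : w ∉ d.vertices := fun hwd =>
        (List.disjoint_of_nodup_append h) hwd (List.mem_flatMap.2 ⟨c, hc', hw⟩)
      obtain ⟨l, hl, hfind⟩ := ih h.of_append_right hc' hw
      exact ⟨l, hl, by rw [List.findSome?_cons, pathTo_eq_none d w hwd]; exact hfind⟩

theorem pathTo_node_child [DecidableEq V] {r : V} {cs : List (RTree V)}
    (h : (node r cs).vertices.Nodup) {c : RTree V} (hc : c ∈ cs) {w : V}
    (hw : w ∈ c.vertices) :
    ∃ l, c.pathTo w = some l ∧ (node r cs).pathTo w = some (r :: l) := by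
  have hrw : r ≠ w := by
    rintro rfl
    exact root_not_mem_flatMap h (List.mem_flatMap.2 ⟨c, hc, hw⟩)
  obtain ⟨l, hl, hfind⟩ := findSome?_pathTo (nodup_flatMap h) hc hw
  refine ⟨l, hl, ?_⟩
  rw [pathTo_node, if_neg hrw, hfind]

theorem depthD_root [DecidableEq V] (x : V) (cs : List (RTree V)) :
    (node x cs).depthD x = 0 := by
  simp [depthD, pathTo_self]

theorem depthD_child [DecidableEq V] {r : V} {cs : List (RTree V)}
    (h : (node r cs).vertices.Nodup) {c : RTree V} (hc : c ∈ cs) {w : V}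
    (hw : w ∈ c.vertices) : (node r cs).depthD w = c.depthD w + 1 := by
  obtain ⟨l, hl, hl'⟩ := pathTo_node_child h hc hw
  obtain ⟨tail, rfl⟩ := pathTo_cons hl
  simp [depthD, hl, hl']

theorem depthD_child_pos [DecidableEq V] {r : V} {cs : List (RTree V)}
    (h : (node r cs).vertices.Nodup) {c : RTree V} (hc : c ∈ cs) {w : V}
    (hw : w ∈ c.vertices) : 1 ≤ (node r cs).depthD w := by
  rw [depthD_child h hc hw]; omega

end RTree

theorem commonPrefix_cons_same {V : Type} [DecidableEq V] (a : V) (l l' : List V) :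
    commonPrefix (a :: l) (a :: l') = a :: commonPrefix l l' := by
  rw [commonPrefix, if_pos rfl]

theorem commonPrefix_cons_ne {V : Type} [DecidableEq V] {a b : V} (h : a ≠ b)
    (l l' : List V) : commonPrefix (a :: l) (b :: l') = [] := by
  rw [commonPrefix, if_neg h]

theorem commonPrefix_nil_left {V : Type} [DecidableEq V] (l : List V) :
    commonPrefix [] l = [] := by cases l <;> rfl

theorem flatMap_split {α β : Type} {f : α → List β} : ∀ {l : List α} {p : List β}
    {e : β} {s : List β}, l.flatMap f = p ++ e :: s →
    ∃ l₁ a l₂ p' s', l = l₁ ++ a :: l₂ ∧ f a = p' ++ e :: s' ∧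
      p = l₁.flatMap f ++ p' ∧ s = s' ++ l₂.flatMap f := by
  intro l
  induction l with
  | nil => intro p e s h; simp at h
  | cons a t ih =>
    intro p e s h
    rw [List.flatMap_cons] at h
    rcases List.append_eq_append_iff.1 h with ⟨w, hw1, hw2⟩ | ⟨w, hw1, hw2⟩
    · obtain ⟨l₁, b, l₂, p', s', rfl, hb, rfl, rfl⟩ := ih hw2
      exact ⟨a :: l₁, b, l₂, p', s', rfl, hb, by simp [hw1], rfl⟩
    · match w, hw2 with
      | [], hw2 =>
        obtain ⟨l₁, b, l₂, p', s', rfl, hb, hnil, rfl⟩ :=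
          ih (p := []) (by simpa using hw2.symm)
        obtain ⟨h1, h2⟩ := List.append_eq_nil_iff.1 hnil.symm
        refine ⟨a :: l₁, b, l₂, p', s', rfl, hb, ?_, rfl⟩
        simp [hw1, h1, h2]
      | e' :: w', hw2 =>
        rw [List.cons_append] at hw2
        obtain ⟨rfl, rfl⟩ := List.cons_eq_cons.1 hw2
        exact ⟨[], a, t, p, w', rfl, by rw [hw1], by simp, rfl⟩

theorem first_split {α : Type} (p : α → Prop) : ∀ {P Q : List α} {a b : α} {S D : List α},
    P ++ a :: S = Q ++ b :: D → (∀ z ∈ P, ¬ p z) → (∀ z ∈ Q, ¬ p z) → p a → p b →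
    P = Q ∧ a = b ∧ S = D := by
  intro P
  induction P with
  | nil =>
    intro Q a b S D h hP hQ ha hb
    match Q, h with
    | [], h =>
      obtain ⟨rfl, rfl⟩ := List.cons_eq_cons.1 h
      exact ⟨rfl, rfl, rfl⟩
    | q :: Q', h =>
      obtain ⟨rfl, _⟩ := List.cons_eq_cons.1 h
      exact absurd ha (hQ _ (List.mem_cons_self))
  | cons x P' ih =>
    intro Q a b S D h hP hQ ha hb
    match Q, h with
    | [], h =>
      obtain ⟨rfl, _⟩ := List.cons_eq_cons.1 h
      exact absurd hb (hP _ (List.mem_cons_self))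
    | q :: Q', h =>
      obtain ⟨rfl, h'⟩ := List.cons_eq_cons.1 h
      obtain ⟨rfl, rfl, rfl⟩ := ih h' (fun z hz => hP z (List.mem_cons_of_mem _ hz))
        (fun z hz => hQ z (List.mem_cons_of_mem _ hz)) ha hb
      exact ⟨rfl, rfl, rfl⟩

-- ==== layer 3 : small extras ====
namespace RTree
variable {V : Type}

theorem pathTo_self' [DecidableEq V] (t : RTree V) : t.pathTo t.root = some [t.root] := by
  obtain ⟨x, cs⟩ := t; exact pathTo_self x cs

theorem depthD_root' [DecidableEq V] (t : RTree V) : t.depthD t.root = 0 := by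
  simp [depthD, pathTo_self']

/-- If `(pv,v)` occurs in the flatMap of blocks over `cs₂` and `v ≠ r`,
then `v` lies in the vertex set of some `c' ∈ cs₂`. -/
theorem head_in_blocks [DecidableEq V] {r : V} {cs₂ : List (RTree V)} {pv v : V}
    {m₂ l₃ : List (V × V)}
    (hflat : cs₂.flatMap (fun c => ((r, c.root) :: c.tour) ++ [(c.root, r)])
      = m₂ ++ (pv, v) :: l₃) (hvr : v ≠ r) : ∃ c' ∈ cs₂, v ∈ c'.vertices := by
  obtain ⟨d₁, c', d₂, q, q', hcs₂, hb, _, _⟩ := flatMap_split hflat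
  have hmem : (pv, v) ∈ ((r, c'.root) :: c'.tour) ++ [(c'.root, r)] := by
    rw [hb]; exact List.mem_append_right _ (List.mem_cons_self)
  have hc' : c' ∈ cs₂ := by
    rw [hcs₂]; exact List.mem_append_right _ (List.mem_cons_self)
  simp only [List.cons_append, List.mem_cons, List.mem_append, List.mem_singleton,
    Prod.mk.injEq] at hmem
  rcases hmem with ⟨_, h2⟩ | h2 | ⟨h2, h3⟩ | h4
  · exact ⟨c', hc', h2 ▸ c'.root_mem_vertices⟩
  · exact ⟨c', hc', (tour_mem_vertices c' pv v h2).2⟩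
  · exact absurd h3 hvr
  · exact absurd h4 List.not_mem_nil

end RTree

-- ==== layer 4 : conclusion builders ====
namespace RTree
variable {V : Type} [DecidableEq V]

/-- Conclusion of the main theorem, abstracted. -/
def Concl (T : RTree V) (u v pu x y : V) : Prop :=
  (∃ Pu Pv : List V, T.pathTo u = some Pu ∧ T.pathTo v = some Pv ∧
    (commonPrefix Pu Pv).getLast? = some y) ∧
  ((x, y) ≠ (pu, u) → ∃ Pu : List V, T.pathTo u = some Pu ∧
    ∃ a b : List V, Pu = a ++ y :: x :: b)

/-- Conclusion builder for the "crossing" case: `u` in child `c`, `v` in a later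
child `c'`, and `(x,y) = (c.root, r)`. -/
theorem concl_B {r : V} {cs₁ cs₂ : List (RTree V)} {c c' : RTree V}
    (hnodup : (node r (cs₁ ++ c :: cs₂)).vertices.Nodup) (hc' : c' ∈ cs₂)
    {u v pu : V} (hu : u ∈ c.vertices) (hv : v ∈ c'.vertices) :
    Concl (node r (cs₁ ++ c :: cs₂)) u v pu c.root r := by
  have hc : c ∈ cs₁ ++ c :: cs₂ := List.mem_append_right _ (List.mem_cons_self)
  have hc'' : c' ∈ cs₁ ++ c :: cs₂ := List.mem_append_right _ (List.mem_cons_of_mem _ hc')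
  obtain ⟨lu, hlu, hTu⟩ := pathTo_node_child hnodup hc hu
  obtain ⟨lv, hlv, hTv⟩ := pathTo_node_child hnodup hc'' hv
  obtain ⟨tu', rfl⟩ := pathTo_cons hlu
  obtain ⟨tv', rfl⟩ := pathTo_cons hlv
  have hne : c.root ≠ c'.root := by
    intro h
    exact disj_of_nodup (nodup_flatMap hnodup) (Or.inr hc') (c.root_mem_vertices)
      (h ▸ c'.root_mem_vertices)
  constructor
  · refine ⟨_, _, hTu, hTv, ?_⟩
    rw [commonPrefix_cons_same, commonPrefix_cons_ne hne]
    rfl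
  · intro _
    exact ⟨_, hTu, [], tu', rfl⟩

/-- Conclusion builder for the case `(x,y) = (pu,u)` with `u = c.root` and `v` in `c`. -/
theorem concl_A1 {r : V} {cs : List (RTree V)} {c : RTree V}
    (hnodup : (node r cs).vertices.Nodup) (hc : c ∈ cs)
    {v pu : V} (hv : v ∈ c.vertices) :
    Concl (node r cs) c.root v pu pu c.root := by
  have hu : c.root ∈ c.vertices := c.root_mem_vertices
  obtain ⟨lu, hlu, hTu⟩ := pathTo_node_child hnodup hc hu
  rw [pathTo_self'] at hlu
  obtain rfl := (Option.some_inj.1 hlu).symm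
  obtain ⟨lv, hlv, hTv⟩ := pathTo_node_child hnodup hc hv
  obtain ⟨tv', rfl⟩ := pathTo_cons hlv
  constructor
  · refine ⟨_, _, hTu, hTv, ?_⟩
    rw [commonPrefix_cons_same, commonPrefix_cons_same, commonPrefix_nil_left]
    rfl
  · intro hne; exact absurd rfl hne

end RTree

-- ==== layer 5 : main lemma ====
namespace RTree
variable {V : Type} [DecidableEq V]

theorem main_lemma : ∀ (n : ℕ) (T : RTree V), sizeOf T ≤ n → T.vertices.Nodup →
    ∀ (u v pu pv : V) (tu tv : RTree V), T.SubtreeAt pu tu → tu.root = u →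
    T.SubtreeAt pv tv → tv.root = v → ∀ (l₁ l₂ l₃ : List (V × V)),
    T.tour = l₁ ++ (pu, u) :: (l₂ ++ (pv, v) :: l₃) →
    ∀ (x y : V) (L₁ L₂ : List (V × V)),
    (pu, u) :: (l₂ ++ [(pv, v)]) = L₁ ++ (x, y) :: L₂ →
    (∀ e ∈ (pu, u) :: (l₂ ++ [(pv, v)]), T.depthD y ≤ T.depthD e.2) →
    (∀ e ∈ L₁, T.depthD y < T.depthD e.2) →
    Concl T u v pu x y := by
  intro n
  induction n with
  | zero =>
    intro T hT
    obtain ⟨r, cs⟩ := T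
    simp only [RTree.node.sizeOf_spec] at hT
    omega
  | succ n ih =>
    intro T hT hnodup u v pu pv tu tv hu hru hv hrv l₁ l₂ l₃ hsplit x y L₁ L₂ hL hmin hfirst
    obtain ⟨r, cs⟩ := T
    have hsize : ∀ c ∈ cs, sizeOf c ≤ n := by
      intro c hc
      have h1 := List.sizeOf_lt_of_mem hc
      simp only [RTree.node.sizeOf_spec] at hT
      omega
    have hu_mem : ∃ c ∈ cs, u ∈ c.vertices := hru ▸ subtree_root_mem_child hu
    have hv_mem : ∃ c ∈ cs, v ∈ c.vertices := hrv ▸ subtree_root_mem_child hv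
    have hur : u ≠ r := by
      obtain ⟨c, hc, hcu⟩ := hu_mem
      rintro rfl
      exact root_not_mem_flatMap hnodup (List.mem_flatMap.2 ⟨c, hc, hcu⟩)
    have hvr : v ≠ r := by
      obtain ⟨c, hc, hcv⟩ := hv_mem
      rintro rfl
      exact root_not_mem_flatMap hnodup (List.mem_flatMap.2 ⟨c, hc, hcv⟩)
    rw [tour_node] at hsplit
    obtain ⟨cs₁, c, cs₂, p', s', hcs, hblock, hl₁, hrest⟩ := flatMap_split hsplit
    subst hcs
    have hc : c ∈ cs₁ ++ c :: cs₂ := List.mem_append_right _ (List.mem_cons_self)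
    have hnodflat := nodup_flatMap hnodup
    have hnodc : c.vertices.Nodup := nodup_child hnodflat hc
    have hrnotc : r ∉ c.vertices := fun h =>
      root_not_mem_flatMap hnodup (List.mem_flatMap.2 ⟨c, hc, h⟩)
    have hdepthr : (node r (cs₁ ++ c :: cs₂)).depthD r = 0 := depthD_root r _
    have hdepthc : ∀ w ∈ c.vertices,
        (node r (cs₁ ++ c :: cs₂)).depthD w = c.depthD w + 1 :=
      fun w hw => depthD_child hnodup hc hw
    have hdepthc1 : ∀ w ∈ c.vertices, 1 ≤ (node r (cs₁ ++ c :: cs₂)).depthD w :=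
      fun w hw => depthD_child_pos hnodup hc hw
    have hxy_mem : (x, y) ∈ (pu, u) :: (l₂ ++ [(pv, v)]) := by
      rw [hL]; exact List.mem_append_right _ (List.mem_cons_self)
    have hL₁_sub : ∀ e ∈ L₁, e ∈ (pu, u) :: (l₂ ++ [(pv, v)]) := by
      intro e he; rw [hL]; exact List.mem_append_left _ he
    clear hsplit
    match p', hblock with
    | [], hblock =>
      -- (pu,u) = (r, c.root)
      rw [List.nil_append, List.cons_append] at hblock
      obtain ⟨h1, rfl⟩ := List.cons_eq_cons.1 hblock
      obtain ⟨rfl, rfl⟩ := Prod.mk.injEq .. ▸ h1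
      -- now pu := r and u := c.root have been eliminated
      rw [List.append_assoc, List.singleton_append] at hrest
      rcases List.append_eq_append_iff.1 hrest with ⟨w, hw1, hw2⟩ | ⟨w, hw1, hw2⟩
      · -- (pv,v) inside c.tour : case A1
        match w, hw2 with
        | [], hw2 =>
          rw [List.nil_append] at hw2
          obtain ⟨h2, _⟩ := List.cons_eq_cons.1 hw2
          exact absurd (Prod.mk.injEq .. ▸ h2).2 hvr
        | (a, b) :: m', hw2 =>
          rw [List.cons_append] at hw2
          obtain ⟨h2, hm'⟩ := List.cons_eq_cons.1 hw2
          obtain ⟨rfl, rfl⟩ := Prod.mk.injEq .. ▸ h2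
          have htourc : c.tour = l₂ ++ (pv, v) :: m' := hw1
          have hseg_c : ∀ e ∈ l₂ ++ [(pv, v)], e ∈ c.tour := by
            intro e he
            rw [htourc]
            rcases List.mem_append.1 he with h | h
            · exact List.mem_append_left _ h
            · rw [List.mem_singleton.1 h]
              exact List.mem_append_right _ (List.mem_cons_self)
          have hhead_c : ∀ e ∈ l₂ ++ [(pv, v)], e.2 ∈ c.vertices := by
            intro e he
            have h5 := hseg_c e he
            rw [← Prod.mk.eta (p := e)] at h5
            exact (tour_mem_vertices c e.1 e.2 h5).2
          have hdu : (node r (cs₁ ++ c :: cs₂)).depthD c.root = 1 := by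
            rw [hdepthc _ c.root_mem_vertices, depthD_root']
          match L₁, hL with
          | [], hL =>
            rw [List.nil_append] at hL
            obtain ⟨h3, _⟩ := List.cons_eq_cons.1 hL
            obtain ⟨rfl, rfl⟩ := Prod.mk.injEq .. ▸ h3.symm
            have hvc : v ∈ c.vertices := hhead_c (pv, v)
              (List.mem_append_right _ (List.mem_cons_self))
            exact concl_A1 hnodup hc hvc
          | f :: L₁', hL =>
            obtain ⟨rfl, hL'⟩ := List.cons_eq_cons.1 hL
            have hylt0 := hfirst _ (List.mem_cons_self)
            have hylt : (node r (cs₁ ++ c :: cs₂)).depthD y < 1 := by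
              simpa [hdu] using hylt0
            have hy_mem : (x, y) ∈ l₂ ++ [(pv, v)] := by
              rw [hL']; exact List.mem_append_right _ (List.mem_cons_self)
            have := hdepthc1 y (hhead_c _ hy_mem)
            omega
      · -- (c.root, r) inside the segment : case B1
        match w, hw2 with
        | [], hw2 =>
          rw [List.nil_append] at hw2
          obtain ⟨h2, _⟩ := List.cons_eq_cons.1 hw2.symm
          exact absurd (Prod.mk.injEq .. ▸ h2).2 hvr
        | (a, b) :: m₂, hw2 =>
          rw [List.cons_append] at hw2
          obtain ⟨h2, hm₂⟩ := List.cons_eq_cons.1 hw2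
          obtain ⟨rfl, rfl⟩ := Prod.mk.injEq .. ▸ h2
          subst hw1
          obtain ⟨c', hc', hvc'⟩ := head_in_blocks hm₂ hvr
          have hLrw : ((r, c.root) :: c.tour) ++ (c.root, r) :: (m₂ ++ [(pv, v)])
              = L₁ ++ (x, y) :: L₂ := by
            rw [← hL]; simp
          have hyd : (node r (cs₁ ++ c :: cs₂)).depthD y = 0 := by
            have h6 := hmin (c.root, r) (by
              rw [hL, ← hLrw]
              exact List.mem_append_right _ (List.mem_cons_self))
            rw [hdepthr] at h6
            omega
          have hP : ∀ z ∈ (r, c.root) :: c.tour,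
              ¬ ((node r (cs₁ ++ c :: cs₂)).depthD z.2 = 0) := by
            intro z hz
            rcases List.mem_cons.1 hz with rfl | hz'
            · show ¬ ((node r (cs₁ ++ c :: cs₂)).depthD c.root = 0)
              have := hdepthc1 c.root c.root_mem_vertices; omega
            · rw [← Prod.mk.eta (p := z)] at hz'
              have := hdepthc1 z.2 (tour_mem_vertices c z.1 z.2 hz').2
              omega
          have hQ : ∀ z ∈ L₁, ¬ ((node r (cs₁ ++ c :: cs₂)).depthD z.2 = 0) := by
            intro z hz
            have := hfirst z hz; omega
          obtain ⟨hPL, hxy, _⟩ := first_split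
            (fun e => (node r (cs₁ ++ c :: cs₂)).depthD e.2 = 0)
            hLrw hP hQ hdepthr hyd
          obtain ⟨rfl, rfl⟩ := Prod.mk.injEq .. ▸ hxy.symm
          exact concl_B hnodup hc' c.root_mem_vertices hvc'
    | (a, b) :: p'', hblock =>
      rw [List.cons_append, List.cons_append] at hblock
      obtain ⟨h1, hblock'⟩ := List.cons_eq_cons.1 hblock
      obtain ⟨rfl, rfl⟩ := Prod.mk.injEq .. ▸ h1
      -- c.tour ++ [(c.root, r)] = p'' ++ (pu, u) :: s'
      rcases List.append_eq_append_iff.1 hblock' with ⟨w, hw1, hw2⟩ | ⟨w, hw1, hw2⟩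
      · -- (pu,u) inside the trailing [(c.root, r)] : impossible
        match w, hw2 with
        | [], hw2 =>
          rw [List.nil_append] at hw2
          obtain ⟨h2, _⟩ := List.cons_eq_cons.1 hw2
          exact absurd (Prod.mk.injEq .. ▸ h2).2 (Ne.symm hur)
        | f :: m', hw2 =>
          rw [List.cons_append] at hw2
          obtain ⟨_, hcontra⟩ := List.cons_eq_cons.1 hw2
          simp at hcontra
      · match w, hw2 with
        | [], hw2 =>
          rw [List.nil_append] at hw2
          obtain ⟨h2, _⟩ := List.cons_eq_cons.1 hw2
          exact absurd (Prod.mk.injEq .. ▸ h2).2 hur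
        | (a', b') :: m', hw2 =>
          rw [List.cons_append] at hw2
          obtain ⟨h2, hm'⟩ := List.cons_eq_cons.1 hw2
          obtain ⟨rfl, rfl⟩ := Prod.mk.injEq .. ▸ h2
          -- c.tour = p'' ++ (pu, u) :: m' ;  s' = m' ++ [(c.root, r)]
          have htu_mem : (pu, u) ∈ c.tour := by
            rw [hw1]; exact List.mem_append_right _ (List.mem_cons_self)
          have huc : u ∈ c.vertices := (tour_mem_vertices c pu u htu_mem).2
          have hpuc : pu ∈ c.vertices := (tour_mem_vertices c pu u htu_mem).1
          have hpur : pu ≠ r := fun h => hrnotc (h ▸ hpuc)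
          have hsub_u : SubtreeAt c pu tu := by
            cases hu with
            | child h => exact absurd rfl hpur
            | @step _ _ c'' _ _ hc'' h'' =>
              have huc'' : u ∈ c''.vertices := hru ▸ subtree_root_mem h''
              rcases List.mem_append.1 hc'' with h3 | h3
              · exact absurd huc (fun hh =>
                  disj_of_nodup hnodflat (Or.inl h3) hh huc'')
              · rcases List.mem_cons.1 h3 with rfl | h4
                · exact h''
                · exact absurd huc (fun hh =>
                    disj_of_nodup hnodflat (Or.inr h4) hh huc'')
          rw [hm', List.append_assoc, List.singleton_append] at hrest
          rcases List.append_eq_append_iff.1 hrest with ⟨w2, hz1, hz2⟩ | ⟨w2, hz1, hz2⟩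
          · -- (pv, v) inside c.tour : case A2 (recursion)
            match w2, hz2 with
            | [], hz2 =>
              rw [List.nil_append] at hz2
              obtain ⟨h3, _⟩ := List.cons_eq_cons.1 hz2
              exact absurd (Prod.mk.injEq .. ▸ h3).2 hvr
            | (a2, b2) :: m₂, hz2 =>
              rw [List.cons_append] at hz2
              obtain ⟨h3, hm₂⟩ := List.cons_eq_cons.1 hz2
              obtain ⟨rfl, rfl⟩ := Prod.mk.injEq .. ▸ h3
              -- m' = l₂ ++ (pv,v) :: m₂
              have htourc : c.tour = p'' ++ (pu, u) :: (l₂ ++ (pv, v) :: m₂) := by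
                rw [hw1, hz1]
              have hseg_c : ∀ e ∈ (pu, u) :: (l₂ ++ [(pv, v)]), e ∈ c.tour := by
                intro e he
                rw [htourc]
                rcases List.mem_cons.1 he with rfl | he'
                · exact List.mem_append_right _ (List.mem_cons_self)
                rcases List.mem_append.1 he' with h4 | h4
                · exact List.mem_append_right _ (List.mem_cons_of_mem _
                    (List.mem_append_left _ h4))
                · rw [List.mem_singleton.1 h4]
                  exact List.mem_append_right _ (List.mem_cons_of_mem _
                    (List.mem_append_right _ (List.mem_cons_self)))
              have hhead_c : ∀ e ∈ (pu, u) :: (l₂ ++ [(pv, v)]), e.2 ∈ c.vertices := by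
                intro e he
                have h5 := hseg_c e he
                rw [← Prod.mk.eta (p := e)] at h5
                exact (tour_mem_vertices c e.1 e.2 h5).2
              have htv_mem : (pv, v) ∈ c.tour := hseg_c (pv, v)
                (List.mem_cons_of_mem _ (List.mem_append_right _ (List.mem_cons_self)))
              have hvc : v ∈ c.vertices := (tour_mem_vertices c pv v htv_mem).2
              have hpvc : pv ∈ c.vertices := (tour_mem_vertices c pv v htv_mem).1
              have hpvr : pv ≠ r := fun h => hrnotc (h ▸ hpvc)
              have hsub_v : SubtreeAt c pv tv := by
                cases hv with
                | child h => exact absurd rfl hpvr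
                | @step _ _ c'' _ _ hc'' h'' =>
                  have hvc'' : v ∈ c''.vertices := hrv ▸ subtree_root_mem h''
                  rcases List.mem_append.1 hc'' with h3 | h3
                  · exact absurd hvc (fun hh =>
                      disj_of_nodup hnodflat (Or.inl h3) hh hvc'')
                  · rcases List.mem_cons.1 h3 with rfl | h4
                    · exact h''
                    · exact absurd hvc (fun hh =>
                        disj_of_nodup hnodflat (Or.inr h4) hh hvc'')
              have hyc : y ∈ c.vertices := hhead_c _ hxy_mem
              have hmin' : ∀ e ∈ (pu, u) :: (l₂ ++ [(pv, v)]),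
                  c.depthD y ≤ c.depthD e.2 := by
                intro e he
                have h6 := hmin e he
                rw [hdepthc y hyc, hdepthc e.2 (hhead_c e he)] at h6
                omega
              have hfirst' : ∀ e ∈ L₁, c.depthD y < c.depthD e.2 := by
                intro e he
                have h6 := hfirst e he
                rw [hdepthc y hyc, hdepthc e.2 (hhead_c e (hL₁_sub e he))] at h6
                omega
              obtain ⟨⟨Pu, Pv, hPu, hPv, hlast⟩, hsecond⟩ :=
                ih c (hsize c hc) hnodc u v pu pv tu tv hsub_u hru hsub_v hrv
                  p'' l₂ m₂ htourc x y L₁ L₂ hL hmin' hfirst'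
              obtain ⟨lu, hlu, hTu⟩ := pathTo_node_child hnodup hc
                (mem_of_pathTo c u Pu hPu)
              obtain rfl : Pu = lu := by rw [hPu] at hlu; exact Option.some_inj.1 hlu
              obtain ⟨lv, hlv, hTv⟩ := pathTo_node_child hnodup hc
                (mem_of_pathTo c v Pv hPv)
              obtain rfl : Pv = lv := by rw [hPv] at hlv; exact Option.some_inj.1 hlv
              constructor
              · refine ⟨_, _, hTu, hTv, ?_⟩
                obtain ⟨tu', hPu'⟩ := pathTo_cons hPu
                obtain ⟨tv', hPv'⟩ := pathTo_cons hPv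
                rw [commonPrefix_cons_same]
                have hne : commonPrefix Pu Pv ≠ [] := by
                  rw [hPu', hPv', commonPrefix_cons_same]
                  simp
                rcases hcp : commonPrefix Pu Pv with _ | ⟨d, ds⟩
                · exact absurd hcp hne
                · rw [List.getLast?_cons_cons, ← hcp, hlast]
              · intro hne
                obtain ⟨Pu', hPu', a3, b3, heq⟩ := hsecond hne
                obtain rfl : Pu = Pu' := by
                  rw [hPu] at hPu'; exact Option.some_inj.1 hPu'
                exact ⟨r :: Pu, hTu, r :: a3, b3, by rw [heq]; rfl⟩
          · -- (c.root, r) inside the segment : case B2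
            match w2, hz2 with
            | [], hz2 =>
              rw [List.nil_append] at hz2
              obtain ⟨h3, _⟩ := List.cons_eq_cons.1 hz2.symm
              exact absurd (Prod.mk.injEq .. ▸ h3).2 hvr
            | (a2, b2) :: m₂, hz2 =>
              rw [List.cons_append] at hz2
              obtain ⟨h3, hm₂⟩ := List.cons_eq_cons.1 hz2
              obtain ⟨rfl, rfl⟩ := Prod.mk.injEq .. ▸ h3
              subst hz1
              -- l₂ = m' ++ (c.root, r) :: m₂ ; flat cs₂ = m₂ ++ (pv,v)::l₃
              obtain ⟨c', hc', hvc'⟩ := head_in_blocks hm₂ hvr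
              have hm'_sub : ∀ e ∈ m', e ∈ c.tour := by
                intro e he
                rw [hw1]
                exact List.mem_append_right _ (List.mem_cons_of_mem _ he)
              have hLrw : ((pu, u) :: m') ++ (c.root, r) :: (m₂ ++ [(pv, v)])
                  = L₁ ++ (x, y) :: L₂ := by
                rw [← hL]; simp
              have hyd : (node r (cs₁ ++ c :: cs₂)).depthD y = 0 := by
                have h6 := hmin (c.root, r) (by
                  rw [hL, ← hLrw]
                  exact List.mem_append_right _ (List.mem_cons_self))
                rw [hdepthr] at h6
                omega
              have hP : ∀ z ∈ (pu, u) :: m',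
                  ¬ ((node r (cs₁ ++ c :: cs₂)).depthD z.2 = 0) := by
                intro z hz
                rcases List.mem_cons.1 hz with rfl | hz'
                · show ¬ ((node r (cs₁ ++ c :: cs₂)).depthD u = 0)
                  have := hdepthc1 u huc; omega
                · have h7 := hm'_sub z hz'
                  rw [← Prod.mk.eta (p := z)] at h7
                  have := hdepthc1 z.2 (tour_mem_vertices c z.1 z.2 h7).2
                  omega
              have hQ : ∀ z ∈ L₁,
                  ¬ ((node r (cs₁ ++ c :: cs₂)).depthD z.2 = 0) := by
                intro z hz
                have := hfirst z hz; omega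
              obtain ⟨hPL, hxy, _⟩ := first_split
                (fun e => (node r (cs₁ ++ c :: cs₂)).depthD e.2 = 0)
                hLrw hP hQ hdepthr hyd
              obtain ⟨rfl, rfl⟩ := Prod.mk.injEq .. ▸ hxy.symm
              exact concl_B hnodup hc' huc hvc'

end RTree

/-- LCA via range minimum on the Euler tour: let `T` be a finite rooted
tree with distinct vertex labels, `u` and `v` non-root vertices with parents `pu`, `pv`,
and suppose `e_u = (pu,u)` occurs before `e_v = (pv,v)` in `ET(T)`.  If `ê = (x,y)` is the
first edge of the contiguous sublist of `ET(T)` from `e_u` to `e_v` (inclusive) whose head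
has minimum depth among heads of edges of this sublist, then `y` is the lowest common
ancestor of `u` and `v` (the last common vertex of the root-to-`u` and root-to-`v` paths);
moreover, if `ê ≠ e_u` then `x` is the child of `y` on the tree path from `y` to `u`. -/
theorem stmt14 {V : Type} [DecidableEq V] (T : RTree V) (hnodup : T.vertices.Nodup)
    (u v pu pv : V) (tu tv : RTree V)
    (hu : T.SubtreeAt pu tu) (hru : tu.root = u)
    (hv : T.SubtreeAt pv tv) (hrv : tv.root = v)
    (l₁ l₂ l₃ : List (V × V))
    (hsplit : T.tour = l₁ ++ (pu, u) :: (l₂ ++ (pv, v) :: l₃))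
    (x y : V) (L₁ L₂ : List (V × V))
    (hL : (pu, u) :: (l₂ ++ [(pv, v)]) = L₁ ++ (x, y) :: L₂)
    (hmin : ∀ e ∈ (pu, u) :: (l₂ ++ [(pv, v)]), T.depthD y ≤ T.depthD e.2)
    (hfirst : ∀ e ∈ L₁, T.depthD y < T.depthD e.2) :
    (∃ Pu Pv : List V, T.pathTo u = some Pu ∧ T.pathTo v = some Pv ∧
      (commonPrefix Pu Pv).getLast? = some y) ∧
    ((x, y) ≠ (pu, u) → ∃ Pu : List V, T.pathTo u = some Pu ∧
      ∃ a b : List V, Pu = a ++ y :: x :: b) := by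
  exact RTree.main_lemma (sizeOf T) T le_rfl hnodup u v pu pv tu tv hu hru hv hrv
    l₁ l₂ l₃ hsplit x y L₁ L₂ hL hmin hfirst
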